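/- Define u₀ := 0, u_{n+1} := L(u_n), and u(x) := Σ_{j=1}^{∞} i_j(x)·4^{−j} on [0,1)². Then for every n ∈ ℕ, every integer j with 0 ≤ j ≤ 4ⁿ, and every m ≥ n, the following sets coincide exactly: { x ∈ [0,1)² : u_n(x) ≥ j/4ⁿ } = { x ∈ [0,1)² : u_m(x) ≥ j/4ⁿ } = { x ∈ [0,1)² : u(x) ≥ j/4ⁿ }. -/

import Mathlib

open MeasureTheory Set Filter
open scoped ENNReal NNReal

noncomputable section

/-- The half-open unit square `[0,1)²` in `ℝ²`. -/
def unitSq : Set (ℝ × ℝ) := Set.Ico (0:ℝ) 1 ×ˢ Set.Ico (0:ℝ) 1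

/-- The four contractions `B₀, B₁, B₂, B₃` mapping `[0,1)²` onto its four half-open
dyadic subsquares (lower-left, lower-right, upper-left, upper-right). -/
def Bmap (i : Fin 4) (x : ℝ × ℝ) : ℝ × ℝ :=
  (x.1 / 2 + (if i.val % 2 = 1 then (1:ℝ)/2 else 0),
   x.2 / 2 + (if 2 ≤ i.val then (1:ℝ)/2 else 0))

/-- The inverse maps `A₀, A₁, A₂, A₃` of `B₀, …, B₃`. -/
def Amap (i : Fin 4) (x : ℝ × ℝ) : ℝ × ℝ :=
  (2 * x.1 - (if i.val % 2 = 1 then (1:ℝ) else 0),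
   2 * x.2 - (if 2 ≤ i.val then (1:ℝ) else 0))

/-- The four half-open dyadic subsquares `Q₀, Q₁, Q₂, Q₃` of `[0,1)²`. -/
def Qsub (i : Fin 4) : Set (ℝ × ℝ) := Bmap i '' unitSq

/-- The step function `ū = Σ_{i=0}^{3} (i/4)·1_{Q_i}`. -/
def ubar (x : ℝ × ℝ) : ℝ :=
  ∑ i : Fin 4, ((i.val : ℝ) / 4) * (Qsub i).indicator (fun _ => (1:ℝ)) x

/-- The operator `L`: `(Lv)(x) = ū(x) + (1/4) Σ_i v(A_i x)·1_{Q_i}(x)` on `[0,1)²`,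
extended by `0` outside. -/
def Lop (v : ℝ × ℝ → ℝ) : ℝ × ℝ → ℝ :=
  unitSq.indicator fun x =>
    ubar x + (1/4) * ∑ i : Fin 4, (Qsub i).indicator (fun y => v (Amap i y)) x

/-- The `j`-th binary digit `a_j(s) = ⌊2^j s⌋ − 2⌊2^{j−1} s⌋` of `s ∈ [0,1)` (`j ≥ 1`). -/
def bdigit (j : ℕ) (s : ℝ) : ℤ := ⌊(2:ℝ)^j * s⌋ - 2 * ⌊(2:ℝ)^(j-1) * s⌋

/-- The `j`-th quadrant digit `i_j(x) = a_j(x₁) + 2 a_j(x₂) ∈ {0,1,2,3}` of `x ∈ [0,1)²`. -/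
def qdigit (j : ℕ) (x : ℝ × ℝ) : ℤ := bdigit j x.1 + 2 * bdigit j x.2

/-- The Flat Mountain function `u(x) = Σ_{j≥1} i_j(x)·4^{−j}` on `[0,1)²`, `0` outside. -/
def uFM : ℝ × ℝ → ℝ :=
  unitSq.indicator fun x => ∑' j : ℕ, (qdigit (j+1) x : ℝ) / 4^(j+1)

/-- The iterates `u₀ = 0`, `u_{n+1} = L u_n`. -/
def uIter : ℕ → ℝ × ℝ → ℝ
  | 0 => fun _ => 0
  | (n+1) => Lop (uIter n)

/-- The dyadic square `Q_{i₁,…,i_n} = B_{i₁} ∘ ⋯ ∘ B_{i_n} ([0,1)²)` indexed by a finite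
sequence of quadrant digits. -/
def Qseq : List (Fin 4) → Set (ℝ × ℝ)
  | [] => unitSq
  | (i :: l) => Bmap i '' Qseq l

/-- The `j`-th base-4 digit `t_j = ⌊4^j t⌋ − 4⌊4^{j−1} t⌋` of `t ∈ [0,1)` (`j ≥ 1`). -/
def tdigit (j : ℕ) (t : ℝ) : ℤ := ⌊(4:ℝ)^j * t⌋ - 4 * ⌊(4:ℝ)^(j-1) * t⌋

/-- The Lebesgue (Z-order) space-filling curve `γ`. -/
def lcurve (t : ℝ) : ℝ × ℝ :=
  (∑' j : ℕ, ((tdigit (j+1) t % 2 : ℤ) : ℝ) / 2^(j+1),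
   ∑' j : ℕ, ((tdigit (j+1) t / 2 : ℤ) : ℝ) / 2^(j+1))

end
section Aux

lemma mem_unitSq {x : ℝ × ℝ} :
    x ∈ unitSq ↔ (0 ≤ x.1 ∧ x.1 < 1) ∧ (0 ≤ x.2 ∧ x.2 < 1) := by
  simp [unitSq, Set.mem_prod, Set.mem_Ico]

lemma Bmap_Amap (i : Fin 4) (x : ℝ × ℝ) : Bmap i (Amap i x) = x := by
  unfold Bmap Amap
  ext <;> dsimp <;> split <;> ring

lemma Amap_Bmap (i : Fin 4) (x : ℝ × ℝ) : Amap i (Bmap i x) = x := by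
  unfold Bmap Amap
  ext <;> dsimp <;> split <;> ring

lemma mem_Qsub {i : Fin 4} {x : ℝ × ℝ} : x ∈ Qsub i ↔ Amap i x ∈ unitSq := by
  constructor
  · rintro ⟨y, hy, rfl⟩; rwa [Amap_Bmap]
  · intro h; exact ⟨Amap i x, h, Bmap_Amap i x⟩

end Aux
section Digits

lemma floor_two_mul (t : ℝ) : ⌊2*t⌋ = 2*⌊t⌋ ∨ ⌊2*t⌋ = 2*⌊t⌋ + 1 := by
  have h1 := Int.floor_le t
  have h2 := Int.lt_floor_add_one t
  have h3 : (2:ℤ)*⌊t⌋ ≤ ⌊2*t⌋ := by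
    apply Int.le_floor.2; push_cast; linarith
  have h4 : ⌊2*t⌋ < 2*⌊t⌋ + 2 := by
    apply Int.floor_lt.2; push_cast; linarith
  omega

lemma bdigit_cases (j : ℕ) (hj : 1 ≤ j) (s : ℝ) : bdigit j s = 0 ∨ bdigit j s = 1 := by
  obtain ⟨m, rfl⟩ := Nat.exists_eq_add_of_le hj
  unfold bdigit
  have e : (2:ℝ)^(1+m) * s = 2 * ((2:ℝ)^(1+m-1) * s) := by
    simp only [Nat.add_sub_cancel_left]; rw [pow_add]; ring
  rw [e]
  rcases floor_two_mul ((2:ℝ)^(1+m-1) * s) with h | h <;> omega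

lemma bdigit_shift (m : ℕ) (s : ℝ) (c : ℤ) :
    bdigit (m+2) s = bdigit (m+1) (2*s - c) := by
  unfold bdigit
  have e1 : (2:ℝ)^(m+1) * (2*s - c) = 2^(m+2)*s - ((2^(m+1) * c : ℤ) : ℝ) := by
    push_cast; ring
  have e2 : (2:ℝ)^(m+1-1) * (2*s - c) = 2^(m+1)*s - ((2^m * c : ℤ) : ℝ) := by
    simp only [Nat.add_sub_cancel]; push_cast; ring
  have e3 : (m+2) - 1 = m + 1 := rfl
  rw [e3, e1, e2, Int.floor_sub_intCast, Int.floor_sub_intCast]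
  ring

lemma bdigit_one {s : ℝ} (h0 : 0 ≤ s) (h1 : s < 1) : bdigit 1 s = ⌊2*s⌋ := by
  have h : ⌊s⌋ = 0 := Int.floor_eq_zero_iff.2 (Set.mem_Ico.2 ⟨h0, h1⟩)
  unfold bdigit
  simp only [pow_one, Nat.sub_self, pow_zero, one_mul, h]
  ring

end Digits
section Quad

/-- integer constants of `Amap i` -/
def c1 (i : Fin 4) : ℤ := if i.val % 2 = 1 then 1 else 0
def c2 (i : Fin 4) : ℤ := if 2 ≤ i.val then 1 else 0

lemma Amap_eq (i : Fin 4) (x : ℝ × ℝ) :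
    Amap i x = (2*x.1 - (c1 i : ℝ), 2*x.2 - (c2 i : ℝ)) := by
  unfold Amap c1 c2
  split <;> split <;> norm_num

lemma mem_Qsub' {i : Fin 4} {x : ℝ × ℝ} :
    x ∈ Qsub i ↔ ((c1 i : ℝ) ≤ 2*x.1 ∧ 2*x.1 < c1 i + 1) ∧
                 ((c2 i : ℝ) ≤ 2*x.2 ∧ 2*x.2 < c2 i + 1) := by
  rw [mem_Qsub, Amap_eq, mem_unitSq]
  dsimp
  constructor <;> rintro ⟨⟨a,b⟩,⟨c,d⟩⟩ <;>
    exact ⟨⟨by linarith, by linarith⟩, ⟨by linarith, by linarith⟩⟩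

lemma c_eq (i : Fin 4) : c1 i + 2 * c2 i = i.val := by
  unfold c1 c2
  fin_cases i <;> norm_num

lemma sub_of_mem {i : Fin 4} {x : ℝ × ℝ} (hx : x ∈ Qsub i) : x ∈ unitSq := by
  rw [mem_Qsub'] at hx
  have h1 : (0:ℤ) ≤ c1 i ∧ c1 i ≤ 1 := by unfold c1; split <;> omega
  have h2 : (0:ℤ) ≤ c2 i ∧ c2 i ≤ 1 := by unfold c2; split <;> omega
  have h1' : (0:ℝ) ≤ (c1 i : ℝ) ∧ (c1 i : ℝ) ≤ 1 := by exact_mod_cast h1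
  have h2' : (0:ℝ) ≤ (c2 i : ℝ) ∧ (c2 i : ℝ) ≤ 1 := by exact_mod_cast h2
  rw [mem_unitSq]
  obtain ⟨⟨a,b⟩,⟨c,d⟩⟩ := hx
  exact ⟨⟨by linarith [h1'.1], by linarith [h1'.2]⟩, ⟨by linarith [h2'.1], by linarith [h2'.2]⟩⟩

lemma qdigit_one {i : Fin 4} {x : ℝ × ℝ} (hx : x ∈ Qsub i) :
    qdigit 1 x = i.val := by
  have hu := mem_unitSq.1 (sub_of_mem hx)
  rw [mem_Qsub'] at hx
  obtain ⟨⟨a1, a2⟩, ⟨b1, b2⟩⟩ := hx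
  have h1 : ⌊2*x.1⌋ = c1 i := Int.floor_eq_iff.2 ⟨a1, a2⟩
  have h2 : ⌊2*x.2⌋ = c2 i := Int.floor_eq_iff.2 ⟨b1, b2⟩
  unfold qdigit
  rw [bdigit_one hu.1.1 hu.1.2, bdigit_one hu.2.1 hu.2.2, h1, h2, c_eq]

lemma Qsub_unique {i k : Fin 4} {x : ℝ × ℝ} (hi : x ∈ Qsub i) (hk : x ∈ Qsub k) :
    i = k := by
  have h1 := qdigit_one hi
  have h2 := qdigit_one hk
  have : (i.val : ℤ) = k.val := by omega
  exact Fin.ext (by exact_mod_cast this)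

lemma exists_Qsub {x : ℝ × ℝ} (hx : x ∈ unitSq) : ∃ i, x ∈ Qsub i := by
  rw [mem_unitSq] at hx
  obtain ⟨⟨a1, a2⟩, ⟨b1, b2⟩⟩ := hx
  rcases lt_or_ge x.1 (1/2) with h1 | h1 <;> rcases lt_or_ge x.2 (1/2) with h2 | h2
  · refine ⟨0, mem_Qsub'.2 ?_⟩
    have h : c1 (0:Fin 4) = 0 ∧ c2 (0:Fin 4) = 0 := by decide
    rw [h.1, h.2]; push_cast; constructor <;> constructor <;> linarith
  · refine ⟨2, mem_Qsub'.2 ?_⟩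
    have h : c1 (2:Fin 4) = 0 ∧ c2 (2:Fin 4) = 1 := by decide
    rw [h.1, h.2]; push_cast; constructor <;> constructor <;> linarith
  · refine ⟨1, mem_Qsub'.2 ?_⟩
    have h : c1 (1:Fin 4) = 1 ∧ c2 (1:Fin 4) = 0 := by decide
    rw [h.1, h.2]; push_cast; constructor <;> constructor <;> linarith
  · refine ⟨3, mem_Qsub'.2 ?_⟩
    have h : c1 (3:Fin 4) = 1 ∧ c2 (3:Fin 4) = 1 := by decide
    rw [h.1, h.2]; push_cast; constructor <;> constructor <;> linarith

lemma qdigit_shift (k : ℕ) (i : Fin 4) (x : ℝ × ℝ) :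
    qdigit (k+2) x = qdigit (k+1) (Amap i x) := by
  rw [Amap_eq]
  unfold qdigit
  rw [bdigit_shift k x.1 (c1 i), bdigit_shift k x.2 (c2 i)]

end Quad
section Iter

lemma Lop_apply {v : ℝ × ℝ → ℝ} {x : ℝ × ℝ} {i : Fin 4} (hx : x ∈ Qsub i) :
    Lop v x = (i.val : ℝ)/4 + (1/4) * v (Amap i x) := by
  have hu : x ∈ unitSq := sub_of_mem hx
  unfold Lop
  rw [Set.indicator_of_mem hu]
  have hub : ubar x = (i.val : ℝ)/4 := by
    unfold ubar
    rw [Finset.sum_eq_single i]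
    · rw [Set.indicator_of_mem hx]; ring
    · intro k _ hk
      rw [Set.indicator_of_notMem (fun h => hk (Qsub_unique h hx)), mul_zero]
    · intro h; exact absurd (Finset.mem_univ i) h
  have hsum : ∑ k : Fin 4, (Qsub k).indicator (fun y => v (Amap k y)) x
      = v (Amap i x) := by
    rw [Finset.sum_eq_single i]
    · exact Set.indicator_of_mem hx _
    · intro k _ hk; exact Set.indicator_of_notMem (fun h => hk (Qsub_unique h hx)) _
    · intro h; exact absurd (Finset.mem_univ i) h
  rw [hub, hsum]

lemma uIter_eq (n : ℕ) : ∀ x ∈ unitSq,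
    uIter n x = ∑ k ∈ Finset.range n, (qdigit (k+1) x : ℝ)/4^(k+1) := by
  induction n with
  | zero => intro x _; simp [uIter]
  | succ n ih =>
    intro x hx
    obtain ⟨i, hi⟩ := exists_Qsub hx
    have hA : Amap i x ∈ unitSq := mem_Qsub.1 hi
    show Lop (uIter n) x = _
    rw [Lop_apply hi, ih (Amap i x) hA, Finset.sum_range_succ']
    have h0 : ((qdigit (0+1) x : ℤ) : ℝ)/4^(0+1) = (i.val : ℝ)/4 := by
      norm_num [qdigit_one hi]
    rw [h0, Finset.mul_sum, add_comm ((i.val : ℝ)/4)]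
    congr 1
    apply Finset.sum_congr rfl
    intro k _
    rw [← qdigit_shift k i x]
    push_cast
    ring

lemma qdigit_bounds (j : ℕ) (hj : 1 ≤ j) (x : ℝ × ℝ) :
    0 ≤ qdigit j x ∧ qdigit j x ≤ 3 := by
  have h1 := bdigit_cases j hj x.1
  have h2 := bdigit_cases j hj x.2
  unfold qdigit; omega

lemma term_nonneg (x : ℝ × ℝ) (k : ℕ) : 0 ≤ (qdigit (k+1) x : ℝ)/4^(k+1) := by
  apply div_nonneg _ (by positivity)
  exact_mod_cast (qdigit_bounds (k+1) (Nat.le_add_left 1 k) x).1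

lemma term_le (x : ℝ × ℝ) (k : ℕ) : (qdigit (k+1) x : ℝ)/4^(k+1) ≤ 3/4^(k+1) := by
  have h : (qdigit (k+1) x : ℝ) ≤ 3 := by
    exact_mod_cast (qdigit_bounds (k+1) (Nat.le_add_left 1 k) x).2
  exact div_le_div_of_nonneg_right h (by positivity) |>.trans_eq rfl

lemma geom_eq (a : ℕ) (k : ℕ) :
    (3:ℝ)/4^(k+a+1) = (1/4^a) * ((3/4) * (1/4)^k) := by
  rw [pow_add, pow_add, pow_one]
  field_simp
  rw [← mul_pow]; norm_num

lemma summable_geom (a : ℕ) :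
    Summable (fun k : ℕ => (1/4^a : ℝ) * ((3/4) * (1/4)^k)) :=
  ((summable_geometric_of_lt_one (by norm_num : (0:ℝ) ≤ 1/4) (by norm_num)).mul_left
    (3/4)).mul_left _

lemma tsum_geom (a : ℕ) :
    ∑' k : ℕ, ((1/4^a : ℝ) * ((3/4) * (1/4)^k)) = 1/4^a := by
  rw [tsum_mul_left, tsum_mul_left, tsum_geometric_of_lt_one (by norm_num) (by norm_num)]
  norm_num

lemma summable_q (x : ℝ × ℝ) :
    Summable (fun k : ℕ => (qdigit (k+1) x : ℝ)/4^(k+1)) := by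
  apply Summable.of_nonneg_of_le (term_nonneg x) (fun k => ?_) (summable_geom 0)
  rw [← geom_eq 0 k]
  have := term_le x k
  have e : k + 0 + 1 = k + 1 := by omega
  rw [e]
  exact this

end Iter
section Tail

lemma exists_bdigit_zero {s : ℝ} (h0 : 0 ≤ s) (h1 : s < 1) (n : ℕ) :
    ∃ k : ℕ, bdigit (k+n+1) s = 0 := by
  by_contra hc
  push_neg at hc
  have hall : ∀ k, bdigit (k+n+1) s = 1 := fun k =>
    (bdigit_cases (k+n+1) (by omega) s).resolve_left (hc k)
  have key : ∀ k : ℕ, ⌊(2:ℝ)^(n+k) * s⌋ = 2^k * ⌊(2:ℝ)^n * s⌋ + 2^k - 1 := by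
    intro k
    induction k with
    | zero => simp
    | succ k ih =>
      have h := hall k
      unfold bdigit at h
      have e : k+n+1-1 = n+k := by omega
      have e2 : k+n+1 = n+(k+1) := by omega
      rw [e, e2] at h
      have e3 : (2:ℤ)^(k+1) = 2*2^k := by ring
      have e4 : (2:ℤ)^(k+1) * ⌊(2:ℝ)^n*s⌋ = 2*(2^k*⌊(2:ℝ)^n*s⌋) := by ring
      omega
  have hlt : (2:ℝ)^n * s < ⌊(2:ℝ)^n * s⌋ + 1 := Int.lt_floor_add_one _
  obtain ⟨k, hk⟩ := exists_pow_lt_of_lt_one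
    (show (0:ℝ) < (⌊(2:ℝ)^n * s⌋ : ℝ) + 1 - 2^n * s by linarith)
    (by norm_num : (1:ℝ)/2 < 1)
  have h2 : ((2^k * ⌊(2:ℝ)^n * s⌋ + 2^k - 1 : ℤ) : ℝ) ≤ (2:ℝ)^(n+k) * s := by
    rw [← key k]; exact Int.floor_le _
  rw [pow_add] at h2
  push_cast at h2
  have hone : (1/2:ℝ)^k * 2^k = 1 := by
    rw [← mul_pow]; norm_num
  nlinarith [hk, h2, hone, pow_pos (by norm_num : (0:ℝ) < 2) k,
    pow_pos (by norm_num : (0:ℝ) < 1/2) k]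

lemma tail_lt {x : ℝ × ℝ} (hx : x ∈ unitSq) (n : ℕ) :
    ∑' k : ℕ, (qdigit (k+n+1) x : ℝ)/4^(k+n+1) < 1/4^n := by
  have hu := mem_unitSq.1 hx
  obtain ⟨k0, hk0⟩ := exists_bdigit_zero hu.1.1 hu.1.2 n
  have hfn : ∀ k, 0 ≤ (qdigit (k+n+1) x : ℝ)/4^(k+n+1) := fun k => by
    have := term_nonneg x (k+n)
    simpa using this
  have hle : ∀ k, (qdigit (k+n+1) x : ℝ)/4^(k+n+1) ≤ (1/4^n) * ((3/4) * (1/4)^k) := by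
    intro k
    rw [← geom_eq n k]
    have := term_le x (k+n)
    simpa using this
  have hstrict : (qdigit (k0+n+1) x : ℝ)/4^(k0+n+1) < (1/4^n) * ((3/4) * (1/4)^k0) := by
    rw [← geom_eq n k0]
    have hb2 := bdigit_cases (k0+n+1) (by omega) x.2
    have hq : qdigit (k0+n+1) x ≤ 2 := by unfold qdigit; omega
    have hq' : (qdigit (k0+n+1) x : ℝ) < 3 := by
      have : (qdigit (k0+n+1) x : ℝ) ≤ 2 := by exact_mod_cast hq
      linarith
    exact div_lt_div_of_pos_right hq' (by positivity)
  calc ∑' k : ℕ, (qdigit (k+n+1) x : ℝ)/4^(k+n+1)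
      < ∑' k : ℕ, ((1/4^n : ℝ) * ((3/4) * (1/4)^k)) :=
        Summable.tsum_lt_tsum_of_nonneg hfn hle hstrict (summable_geom n)
    _ = 1/4^n := tsum_geom n

end Tail
section Final

lemma uIter_int (n : ℕ) {x : ℝ × ℝ} (hx : x ∈ unitSq) :
    ∃ z : ℤ, uIter n x = (z : ℝ)/4^n := by
  refine ⟨∑ k ∈ Finset.range n, qdigit (k+1) x * 4^(n-(k+1)), ?_⟩
  rw [uIter_eq n x hx]
  push_cast
  rw [Finset.sum_div]
  apply Finset.sum_congr rfl
  intro k hk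
  have hkn : k + 1 ≤ n := Finset.mem_range.1 hk
  have e : (4:ℝ)^(n-(k+1)) * 4^(k+1) = 4^n := by
    rw [← pow_add]; congr 1; omega
  field_simp
  rw [← e]; ring

lemma uFM_eq {x : ℝ × ℝ} (hx : x ∈ unitSq) :
    uFM x = ∑' k : ℕ, (qdigit (k+1) x : ℝ)/4^(k+1) := by
  unfold uFM
  rw [Set.indicator_of_mem hx]

lemma uIter_mono {x : ℝ × ℝ} (hx : x ∈ unitSq) {n m : ℕ} (hm : n ≤ m) :
    uIter n x ≤ uIter m x := by
  rw [uIter_eq n x hx, uIter_eq m x hx]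
  exact Finset.sum_le_sum_of_subset_of_nonneg (Finset.range_subset_range.2 hm)
    (fun k _ _ => term_nonneg x k)

lemma uIter_le_uFM {x : ℝ × ℝ} (hx : x ∈ unitSq) (n : ℕ) :
    uIter n x ≤ uFM x := by
  rw [uIter_eq n x hx, uFM_eq hx]
  exact Summable.sum_le_tsum (Finset.range n) (fun k _ => term_nonneg x k) (summable_q x)

lemma uFM_lt {x : ℝ × ℝ} (hx : x ∈ unitSq) (n : ℕ) :
    uFM x < uIter n x + 1/4^n := by
  rw [uFM_eq hx, uIter_eq n x hx,
    ← Summable.sum_add_tsum_nat_add n (summable_q x)]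
  have : ∑' k : ℕ, (qdigit (k+n+1) x : ℝ)/4^(k+n+1) < 1/4^n := tail_lt hx n
  have e : (fun k : ℕ => (qdigit (k+n+1) x : ℝ)/4^(k+n+1))
      = fun k : ℕ => (qdigit (k+n+1) x : ℝ)/4^(k+n+1) := rfl
  linarith [this]

end Final
/-- Superlevel-set stability (item (ii) of the properties lemma): for every `n`, every
`j ≤ 4ⁿ` and every `m ≥ n`, the superlevel sets of `u_n`, `u_m` and `u` at the dyadic
level `j/4ⁿ` coincide exactly in `[0,1)²`. -/
theorem stmt11 (n : ℕ) (j : ℕ) (hj : j ≤ 4 ^ n) (m : ℕ) (hm : n ≤ m) :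
    {x ∈ unitSq | (j : ℝ) / 4 ^ n ≤ uIter n x}
        = {x ∈ unitSq | (j : ℝ) / 4 ^ n ≤ uIter m x} ∧
    {x ∈ unitSq | (j : ℝ) / 4 ^ n ≤ uIter n x}
        = {x ∈ unitSq | (j : ℝ) / 4 ^ n ≤ uFM x} := by
  have h4 : (0:ℝ) < 4 ^ n := by positivity
  have key : ∀ x ∈ unitSq, (j : ℝ) / 4 ^ n ≤ uFM x → (j : ℝ) / 4 ^ n ≤ uIter n x := by
    intro x hx hu
    obtain ⟨z, hz⟩ := uIter_int n hx
    have hlt : uFM x < ((z:ℝ) + 1)/4^n := by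
      have := uFM_lt hx n
      rw [hz] at this
      calc uFM x < (z:ℝ)/4^n + 1/4^n := this
        _ = ((z:ℝ)+1)/4^n := by ring
    have hjz : (j:ℝ) < (z:ℝ) + 1 := by
      have : (j:ℝ)/4^n < ((z:ℝ)+1)/4^n := lt_of_le_of_lt hu hlt
      exact (div_lt_div_iff_of_pos_right h4).1 this
    have hjz' : (j:ℤ) ≤ z := by exact_mod_cast Int.lt_add_one_iff.1 (by exact_mod_cast hjz)
    rw [hz]
    exact div_le_div_of_nonneg_right (show (j:ℝ) ≤ (z:ℝ) by exact_mod_cast hjz') (by positivity)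
  constructor
  · ext x
    simp only [Set.mem_setOf_eq]
    refine ⟨fun ⟨hx, h⟩ => ⟨hx, h.trans (uIter_mono hx hm)⟩,
      fun ⟨hx, h⟩ => ⟨hx, key x hx (h.trans (uIter_le_uFM hx m))⟩⟩
  · ext x
    simp only [Set.mem_setOf_eq]
    refine ⟨fun ⟨hx, h⟩ => ⟨hx, h.trans (uIter_le_uFM hx n)⟩,
      fun ⟨hx, h⟩ => ⟨hx, key x hx h⟩⟩
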